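/- Let a₁,...,a₅ be positive integers with a₁ > a₂, a₄ > a₅, forming a nearly regular tuple, and let P = {(x,y) ∈ ℝ² : a₁−a₂ ≤ x ≤ a₁+a₂, a₄−a₅ ≤ y ≤ a₄+a₅, |x−y| ≤ a₃ ≤ x+y}. Then the number of integer lattice points in P equals ½(Σaᵢ)² − 2(Σaᵢ²) + ½(Σaᵢ) + 1. -/

import Mathlib

def NearlyRegular (a₁ a₂ a₃ a₄ a₅ : ℝ) : Prop :=
  0 < a₁ ∧ 0 < a₂ ∧ 0 < a₃ ∧ 0 < a₄ ∧ 0 < a₅ ∧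
  a₁ + a₂ < a₃ + a₄ + a₅ ∧ a₁ + a₃ < a₂ + a₄ + a₅ ∧ a₁ + a₄ < a₂ + a₃ + a₅ ∧
  a₁ + a₅ < a₂ + a₃ + a₄ ∧ a₂ + a₃ < a₁ + a₄ + a₅ ∧ a₂ + a₄ < a₁ + a₃ + a₅ ∧
  a₂ + a₅ < a₁ + a₃ + a₄ ∧ a₃ + a₄ < a₁ + a₂ + a₅ ∧ a₃ + a₅ < a₁ + a₂ + a₄ ∧
  a₄ + a₅ < a₁ + a₂ + a₃

def Pent (a₁ a₂ a₃ a₄ a₅ : ℝ) : Set (ℝ × ℝ) :=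
  {p : ℝ × ℝ | a₁ - a₂ ≤ p.1 ∧ p.1 ≤ a₁ + a₂ ∧ a₄ - a₅ ≤ p.2 ∧ p.2 ≤ a₄ + a₅ ∧
    |p.1 - p.2| ≤ a₃ ∧ a₃ ≤ p.1 + p.2}

lemma sum_toNat_sub (l c : ℤ) (hlc : l ≤ c) :
    ∀ u : ℤ, c ≤ u →
      2 * ((∑ x ∈ Finset.Icc l u, (x - c).toNat : ℕ) : ℤ) = (u - c) * (u - c + 1) := by
  refine Int.le_induction ?_ ?_
  · have h0 : ∀ x ∈ Finset.Icc l c, (x - c).toNat = 0 := by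
      intro x hx; simp only [Finset.mem_Icc] at hx; omega
    rw [Finset.sum_congr rfl h0]
    simp
  · intro u hu ih
    have hins : Finset.Icc l (u + 1) = insert (u + 1) (Finset.Icc l u) := by
      ext x; simp only [Finset.mem_Icc, Finset.mem_insert]; omega
    have hnot : (u + 1) ∉ Finset.Icc l u := by simp only [Finset.mem_Icc]; omega
    rw [hins, Finset.sum_insert hnot]
    push_cast
    have h1 : ((u + 1 - c).toNat : ℤ) = u + 1 - c := by omega
    rw [h1]
    push_cast at ih
    linarith [ih]

lemma sum_toNat_sub' (l c u : ℤ) (hlc : l ≤ c) (hcu : c ≤ u) :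
    2 * ((∑ x ∈ Finset.Icc l u, (c - x).toNat : ℕ) : ℤ) = (c - l) * (c - l + 1) := by
  have himg : Finset.Icc l u = (Finset.Icc (-u) (-l)).image (fun x => -x) := by
    ext x
    simp only [Finset.mem_Icc, Finset.mem_image]
    constructor
    · intro hx; exact ⟨-x, by omega, by ring⟩
    · rintro ⟨y, hy, rfl⟩; omega
  rw [himg, Finset.sum_image (by intro a _ b _ h; simpa using h)]
  have hcongr : ∀ x ∈ Finset.Icc (-u) (-l), (c - -x).toNat = (x - (-c)).toNat := by
    intro x _; congr 1; ring
  rw [Finset.sum_congr rfl hcongr, sum_toNat_sub (-u) (-c) (by omega) (-l) (by omega)]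
  ring

lemma fiber_card (s : Finset ℤ) (lo hi : ℤ → ℤ) :
    ((s.biUnion (fun x => ({x} : Finset ℤ) ×ˢ Finset.Icc (lo x) (hi x))).card : ℕ)
      = ∑ x ∈ s, (hi x + 1 - lo x).toNat := by
  rw [Finset.card_biUnion]
  · refine Finset.sum_congr rfl fun x _ => ?_
    rw [Finset.card_product, Finset.card_singleton, one_mul, Int.card_Icc]
  · intro x _ y _ hxy
    simp only [Function.onFun]
    rw [Finset.disjoint_left]
    rintro ⟨p1, p2⟩ hp hq
    simp only [Finset.mem_product, Finset.mem_singleton] at hp hq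
    exact hxy (hp.1 ▸ hq.1 ▸ rfl)

theorem stmt_12 (a₁ a₂ a₃ a₄ a₅ : ℤ)
    (h : NearlyRegular (a₁ : ℝ) a₂ a₃ a₄ a₅)
    (h12 : a₂ < a₁) (h45 : a₅ < a₄) :
    ({p : ℤ × ℤ | ((p.1 : ℝ), (p.2 : ℝ)) ∈
        Pent (a₁ : ℝ) a₂ a₃ a₄ a₅}.ncard : ℝ) =
      (1/2) * ((a₁:ℝ) + a₂ + a₃ + a₄ + a₅)^2
        - 2 * ((a₁:ℝ)^2 + a₂^2 + a₃^2 + a₄^2 + a₅^2)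
        + (1/2) * ((a₁:ℝ) + a₂ + a₃ + a₄ + a₅) + 1 := by
  classical
  obtain ⟨q1, q2, q3, q4, q5, q6, q7, q8, q9, q10, q11, q12, q13, q14, q15⟩ := h
  have i1 : (0:ℤ) < a₁ := by exact_mod_cast q1
  have i2 : (0:ℤ) < a₂ := by exact_mod_cast q2
  have i3 : (0:ℤ) < a₃ := by exact_mod_cast q3
  have i4 : (0:ℤ) < a₄ := by exact_mod_cast q4
  have i5 : (0:ℤ) < a₅ := by exact_mod_cast q5
  have i6 : a₁ + a₂ < a₃ + a₄ + a₅ := by exact_mod_cast q6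
  have i7 : a₁ + a₃ < a₂ + a₄ + a₅ := by exact_mod_cast q7
  have i8 : a₁ + a₄ < a₂ + a₃ + a₅ := by exact_mod_cast q8
  have i9 : a₁ + a₅ < a₂ + a₃ + a₄ := by exact_mod_cast q9
  have i10 : a₂ + a₃ < a₁ + a₄ + a₅ := by exact_mod_cast q10
  have i11 : a₂ + a₄ < a₁ + a₃ + a₅ := by exact_mod_cast q11
  have i12 : a₂ + a₅ < a₁ + a₃ + a₄ := by exact_mod_cast q12
  have i13 : a₃ + a₄ < a₁ + a₂ + a₅ := by exact_mod_cast q13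
  have i14 : a₃ + a₅ < a₁ + a₂ + a₄ := by exact_mod_cast q14
  have i15 : a₄ + a₅ < a₁ + a₂ + a₃ := by exact_mod_cast q15
  -- the rectangle
  set R : Finset (ℤ × ℤ) :=
    Finset.Icc (a₁ - a₂) (a₁ + a₂) ×ˢ Finset.Icc (a₄ - a₅) (a₄ + a₅) with hR
  -- the pentagon as a finset
  have hset : {p : ℤ × ℤ | ((p.1 : ℝ), (p.2 : ℝ)) ∈
        Pent (a₁ : ℝ) a₂ a₃ a₄ a₅} =
      ↑(R.filter (fun p => -a₃ ≤ p.1 - p.2 ∧ p.1 - p.2 ≤ a₃ ∧ a₃ ≤ p.1 + p.2)) := by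
    ext ⟨x, y⟩
    simp only [Set.mem_setOf_eq, Pent, Finset.mem_coe, Finset.mem_filter, hR,
      Finset.mem_product, Finset.mem_Icc, abs_le]
    constructor
    · rintro ⟨h1, h2, h3, h4, ⟨h5, h6⟩, h7⟩
      exact ⟨⟨⟨by exact_mod_cast h1, by exact_mod_cast h2⟩,
        by exact_mod_cast h3, by exact_mod_cast h4⟩,
        by exact_mod_cast h5, by exact_mod_cast h6, by exact_mod_cast h7⟩
    · rintro ⟨⟨⟨h1, h2⟩, h3, h4⟩, h5, h6, h7⟩
      exact ⟨by exact_mod_cast h1, by exact_mod_cast h2, by exact_mod_cast h3,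
        by exact_mod_cast h4, ⟨by exact_mod_cast h5, by exact_mod_cast h6⟩,
        by exact_mod_cast h7⟩
  -- the three cut triangles
  have hT1 : (R.filter (fun p => a₃ < p.1 - p.2))
      = (Finset.Icc (a₁ - a₂) (a₁ + a₂)).biUnion
          (fun x => ({x} : Finset ℤ) ×ˢ Finset.Icc (a₄ - a₅) (x - a₃ - 1)) := by
    ext ⟨x, y⟩
    simp only [Finset.mem_filter, hR, Finset.mem_product, Finset.mem_Icc,
      Finset.mem_biUnion, Finset.mem_singleton]
    constructor
    · rintro ⟨⟨⟨hx1, hx2⟩, hy1, hy2⟩, ht⟩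
      exact ⟨x, ⟨hx1, hx2⟩, rfl, hy1, by omega⟩
    · rintro ⟨a, ⟨ha1, ha2⟩, rfl, hy1, hy2⟩
      exact ⟨⟨⟨ha1, ha2⟩, hy1, by omega⟩, by omega⟩
  have hT2 : (R.filter (fun p => a₃ < p.2 - p.1))
      = (Finset.Icc (a₁ - a₂) (a₁ + a₂)).biUnion
          (fun x => ({x} : Finset ℤ) ×ˢ Finset.Icc (x + a₃ + 1) (a₄ + a₅)) := by
    ext ⟨x, y⟩
    simp only [Finset.mem_filter, hR, Finset.mem_product, Finset.mem_Icc,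
      Finset.mem_biUnion, Finset.mem_singleton]
    constructor
    · rintro ⟨⟨⟨hx1, hx2⟩, hy1, hy2⟩, ht⟩
      exact ⟨x, ⟨hx1, hx2⟩, rfl, by omega, hy2⟩
    · rintro ⟨a, ⟨ha1, ha2⟩, rfl, hy1, hy2⟩
      exact ⟨⟨⟨ha1, ha2⟩, by omega, hy2⟩, by omega⟩
  have hT3 : (R.filter (fun p => p.1 + p.2 < a₃))
      = (Finset.Icc (a₁ - a₂) (a₁ + a₂)).biUnion
          (fun x => ({x} : Finset ℤ) ×ˢ Finset.Icc (a₄ - a₅) (a₃ - 1 - x)) := by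
    ext ⟨x, y⟩
    simp only [Finset.mem_filter, hR, Finset.mem_product, Finset.mem_Icc,
      Finset.mem_biUnion, Finset.mem_singleton]
    constructor
    · rintro ⟨⟨⟨hx1, hx2⟩, hy1, hy2⟩, ht⟩
      exact ⟨x, ⟨hx1, hx2⟩, rfl, hy1, by omega⟩
    · rintro ⟨a, ⟨ha1, ha2⟩, rfl, hy1, hy2⟩
      exact ⟨⟨⟨ha1, ha2⟩, hy1, by omega⟩, by omega⟩
  -- cards of the triangles
  have hc1 : 2 * ((R.filter (fun p => a₃ < p.1 - p.2)).card : ℤ)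
      = (a₁ + a₂ - a₃ - a₄ + a₅) * (a₁ + a₂ - a₃ - a₄ + a₅ + 1) := by
    rw [hT1, fiber_card]
    have hcongr : ∀ x ∈ Finset.Icc (a₁ - a₂) (a₁ + a₂),
        (x - a₃ - 1 + 1 - (a₄ - a₅)).toNat = (x - (a₃ + a₄ - a₅)).toNat := by
      intro x _; congr 1; ring
    rw [Finset.sum_congr rfl hcongr,
      sum_toNat_sub (a₁ - a₂) (a₃ + a₄ - a₅) (by omega) (a₁ + a₂) (by omega)]
    ring
  have hc2 : 2 * ((R.filter (fun p => a₃ < p.2 - p.1)).card : ℤ)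
      = (a₄ + a₅ - a₃ - a₁ + a₂) * (a₄ + a₅ - a₃ - a₁ + a₂ + 1) := by
    rw [hT2, fiber_card]
    have hcongr : ∀ x ∈ Finset.Icc (a₁ - a₂) (a₁ + a₂),
        (a₄ + a₅ + 1 - (x + a₃ + 1)).toNat = ((a₄ + a₅ - a₃) - x).toNat := by
      intro x _; congr 1; ring
    rw [Finset.sum_congr rfl hcongr,
      sum_toNat_sub' (a₁ - a₂) (a₄ + a₅ - a₃) (a₁ + a₂) (by omega) (by omega)]
    ring
  have hc3 : 2 * ((R.filter (fun p => p.1 + p.2 < a₃)).card : ℤ)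
      = (a₃ + a₅ - a₄ - a₁ + a₂) * (a₃ + a₅ - a₄ - a₁ + a₂ + 1) := by
    rw [hT3, fiber_card]
    have hcongr : ∀ x ∈ Finset.Icc (a₁ - a₂) (a₁ + a₂),
        (a₃ - 1 - x + 1 - (a₄ - a₅)).toNat = ((a₃ - a₄ + a₅) - x).toNat := by
      intro x _; congr 1; ring
    rw [Finset.sum_congr rfl hcongr,
      sum_toNat_sub' (a₁ - a₂) (a₃ - a₄ + a₅) (a₁ + a₂) (by omega) (by omega)]
    ring
  -- card of the rectangle
  have hcR : (R.card : ℤ) = (2 * a₂ + 1) * (2 * a₅ + 1) := by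
    rw [hR, Finset.card_product, Int.card_Icc, Int.card_Icc]
    push_cast
    rw [show ((a₁ + a₂ + 1 - (a₁ - a₂)).toNat : ℤ) = 2 * a₂ + 1 from by omega,
      show ((a₄ + a₅ + 1 - (a₄ - a₅)).toNat : ℤ) = 2 * a₅ + 1 from by omega]
  -- splitting the rectangle
  have hneg : R.filter (fun p => ¬(-a₃ ≤ p.1 - p.2 ∧ p.1 - p.2 ≤ a₃ ∧ a₃ ≤ p.1 + p.2))
      = (R.filter (fun p => a₃ < p.1 - p.2) ∪ R.filter (fun p => a₃ < p.2 - p.1))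
          ∪ R.filter (fun p => p.1 + p.2 < a₃) := by
    ext ⟨x, y⟩
    simp only [Finset.mem_filter, Finset.mem_union, hR, Finset.mem_product,
      Finset.mem_Icc, not_and, not_le]
    constructor
    · rintro ⟨⟨⟨hx1, hx2⟩, hy1, hy2⟩, ht⟩
      have hm : x - y < -a₃ ∨ a₃ < x - y ∨ x + y < a₃ := by
        by_contra hcon
        push_neg at hcon
        exact absurd (ht hcon.1 hcon.2.1) (not_lt.mpr hcon.2.2)
      rcases hm with hm | hm | hm
      · exact Or.inl (Or.inr ⟨⟨⟨hx1, hx2⟩, hy1, hy2⟩, by omega⟩)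
      · exact Or.inl (Or.inl ⟨⟨⟨hx1, hx2⟩, hy1, hy2⟩, hm⟩)
      · exact Or.inr ⟨⟨⟨hx1, hx2⟩, hy1, hy2⟩, hm⟩
    · rintro ((⟨hm, ht⟩ | ⟨hm, ht⟩) | ⟨hm, ht⟩) <;>
        exact ⟨hm, by omega⟩
  have hd12 : Disjoint (R.filter (fun p => a₃ < p.1 - p.2))
      (R.filter (fun p => a₃ < p.2 - p.1)) := by
    rw [Finset.disjoint_left]
    rintro ⟨x, y⟩ hp hq
    simp only [Finset.mem_filter] at hp hq
    omega
  have hd3 : Disjoint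
      (R.filter (fun p => a₃ < p.1 - p.2) ∪ R.filter (fun p => a₃ < p.2 - p.1))
      (R.filter (fun p => p.1 + p.2 < a₃)) := by
    rw [Finset.disjoint_left]
    rintro ⟨x, y⟩ hp hq
    simp only [Finset.mem_union, Finset.mem_filter, hR, Finset.mem_product,
      Finset.mem_Icc] at hp hq
    omega
  have hsplit := Finset.card_filter_add_card_filter_not
    (s := R) (p := fun p => -a₃ ≤ p.1 - p.2 ∧ p.1 - p.2 ≤ a₃ ∧ a₃ ≤ p.1 + p.2)
  rw [hneg, Finset.card_union_of_disjoint hd3, Finset.card_union_of_disjoint hd12]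
    at hsplit
  -- assemble over ℤ
  have key : 2 * (((R.filter (fun p => -a₃ ≤ p.1 - p.2 ∧ p.1 - p.2 ≤ a₃ ∧
        a₃ ≤ p.1 + p.2)).card : ℤ))
      = 2 * (2 * a₂ + 1) * (2 * a₅ + 1)
        - (a₁ + a₂ - a₃ - a₄ + a₅) * (a₁ + a₂ - a₃ - a₄ + a₅ + 1)
        - (a₄ + a₅ - a₃ - a₁ + a₂) * (a₄ + a₅ - a₃ - a₁ + a₂ + 1)
        - (a₃ + a₅ - a₄ - a₁ + a₂) * (a₃ + a₅ - a₄ - a₁ + a₂ + 1) := by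
    have hz := congrArg (fun n : ℕ => (n : ℤ)) hsplit
    push_cast at hz
    linarith [hc1, hc2, hc3, hcR, hz]
  rw [hset, Set.ncard_coe_finset]
  have keyR := congrArg (fun n : ℤ => (n : ℝ)) key
  push_cast at keyR
  linear_combination keyR / 2
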